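/- Let K be a field of characteristic zero, E a finite-dimensional K-vector space, w a weight function on E, and m a positive integer. Then there exists a weight function W on the m-th symmetric power Sym^m E such that W(x^m) = m·w(x) for every x ∈ E, where x^m denotes the m-th symmetric power of x. -/

import Mathlib

/-- A weight function on a `K`-vector space `E` is a map `w : E → ℝ ∪ {−∞}` such that
(1) `w x = −∞` iff `x = 0`; (2) `w (t • x) = w x` for all nonzero `t : K`;
(3) `w (x + y) ≤ max (w x) (w y)`. -/
def IsWeightFunction (K : Type*) [Field K] {E : Type*} [AddCommGroup E] [Module K E]
    (w : E → WithBot ℝ) : Prop :=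
  (∀ x : E, w x = ⊥ ↔ x = 0) ∧
  (∀ (t : K) (x : E), t ≠ 0 → w (t • x) = w x) ∧
  (∀ x y : E, w (x + y) ≤ max (w x) (w y))

open scoped TensorProduct in
/-- In characteristic zero, the `m`-th symmetric power `Sym^m E` is the subspace of the
`m`-th tensor power `E^{⊗ m}` consisting of the tensors invariant under the action of
the symmetric group permuting the factors. -/
noncomputable def symmetricPower (K : Type*) [Field K] (E : Type*) [AddCommGroup E]
    [Module K E] (m : ℕ) : Submodule K (⨂[K] _ : Fin m, E) where
  carrier := {t | ∀ σ : Equiv.Perm (Fin m),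
    PiTensorProduct.reindex K (fun _ : Fin m => E) σ t = t}
  add_mem' := by
    intro a b ha hb σ
    rw [map_add, ha σ, hb σ]
  zero_mem' := by
    intro σ
    rw [map_zero]
  smul_mem' := by
    intro c a ha σ
    rw [map_smul, ha σ]

open Finset

open scoped Classical in
/-- Weight function built from a separating family of linear functionals. -/
noncomputable def supWeight {K F : Type*} [Field K] [AddCommGroup F] [Module K F]
    {J : Type*} [Fintype J] (c : J → (F →ₗ[K] K)) (μ : J → ℝ) : F → WithBot ℝ :=
  fun t => univ.sup fun j => if c j t = 0 then ⊥ else ((μ j : ℝ) : WithBot ℝ)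

theorem supWeight_isWeightFunction {K F : Type*} [Field K] [AddCommGroup F] [Module K F]
    {J : Type*} [Fintype J] (c : J → (F →ₗ[K] K)) (μ : J → ℝ)
    (hsep : ∀ t : F, (∀ j, c j t = 0) → t = 0) :
    IsWeightFunction K (supWeight c μ) := by
  classical
  refine ⟨?_, ?_, ?_⟩
  · intro t
    constructor
    · intro h
      apply hsep
      intro j
      rw [supWeight, Finset.sup_eq_bot_iff] at h
      have := h j (mem_univ j)
      by_contra hc
      simp [hc] at this
    · rintro rfl
      rw [supWeight, Finset.sup_eq_bot_iff]
      intro j _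
      simp
  · intro s t hs
    unfold supWeight
    congr 1
    funext j
    simp [map_smul, smul_eq_mul, mul_eq_zero, hs]
  · intro t t'
    show Finset.sup _ _ ≤ _
    apply Finset.sup_le
    intro j _
    by_cases hj : c j (t + t') = 0
    · simp [hj]
    · have : c j t ≠ 0 ∨ c j t' ≠ 0 := by
        by_contra hc
        push_neg at hc
        apply hj
        rw [map_add, hc.1, hc.2, add_zero]
      simp only [hj, if_neg, ite_false]
      rcases this with h1 | h1
      · refine le_trans ?_ (le_max_left _ _)
        refine le_trans ?_ (Finset.le_sup (f := fun j => if c j t = 0 then ⊥ else ((μ j : ℝ) : WithBot ℝ)) (mem_univ j))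
        simp [h1]
      · refine le_trans ?_ (le_max_right _ _)
        refine le_trans ?_ (Finset.le_sup (f := fun j => if c j t' = 0 then ⊥ else ((μ j : ℝ) : WithBot ℝ)) (mem_univ j))
        simp [h1]

open scoped Classical in
theorem sup_support_eq {ι K : Type*} [Zero K] [Fintype ι] (f : ι →₀ K) (g : ι → WithBot ℝ) :
    f.support.sup g = univ.sup fun i => if f i = 0 then ⊥ else g i := by
  apply le_antisymm
  · apply Finset.sup_le
    intro i hi
    have : f i ≠ 0 := Finsupp.mem_support_iff.mp hi
    refine le_trans ?_ (Finset.le_sup (mem_univ i))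
    simp [this]
  · apply Finset.sup_le
    intro i _
    by_cases h : f i = 0
    · simp [h]
    · simp only [h, ite_false]
      exact Finset.le_sup (Finsupp.mem_support_iff.mpr h)

theorem weight_zero {K E : Type*} [Field K] [AddCommGroup E] [Module K E]
    {w : E → WithBot ℝ} (hw : IsWeightFunction K w) : w 0 = ⊥ := (hw.1 0).mpr rfl

/-- Submodule of vectors with weight ≤ c. -/
def weightBall {K E : Type*} [Field K] [AddCommGroup E] [Module K E]
    (w : E → WithBot ℝ) (hw : IsWeightFunction K w) (c : ℝ) : Submodule K E where
  carrier := {x | w x ≤ (c : WithBot ℝ)}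
  add_mem' := by
    intro a b ha hb
    exact le_trans (hw.2.2 a b) (max_le ha hb)
  zero_mem' := by
    simp [Set.mem_setOf_eq, weight_zero hw]
  smul_mem' := by
    intro t x hx
    by_cases ht : t = 0
    · subst ht
      rw [zero_smul]
      simp [Set.mem_setOf_eq, weight_zero hw]
    · simpa [Set.mem_setOf_eq, hw.2.1 t x ht] using hx

/-- Submodule of vectors with weight < c. -/
def weightBallLT {K E : Type*} [Field K] [AddCommGroup E] [Module K E]
    (w : E → WithBot ℝ) (hw : IsWeightFunction K w) (c : ℝ) : Submodule K E where
  carrier := {x | w x < (c : WithBot ℝ)}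
  add_mem' := by
    intro a b ha hb
    exact lt_of_le_of_lt (hw.2.2 a b) (max_lt ha hb)
  zero_mem' := by
    simp only [Set.mem_setOf_eq, weight_zero hw]
    exact WithBot.bot_lt_coe c
  smul_mem' := by
    intro t x hx
    by_cases ht : t = 0
    · subst ht
      rw [zero_smul]
      simp only [Set.mem_setOf_eq, weight_zero hw]
      exact WithBot.bot_lt_coe c
    · simpa [Set.mem_setOf_eq, hw.2.1 t x ht] using hx

/-- The set of real values of a weight function on a finite-dimensional space is finite. -/
theorem weight_values_finite {K E : Type*} [Field K] [AddCommGroup E] [Module K E]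
    [FiniteDimensional K E] {w : E → WithBot ℝ} (hw : IsWeightFunction K w) :
    {c : ℝ | ∃ x : E, w x = (c : WithBot ℝ)}.Finite := by
  set S := {c : ℝ | ∃ x : E, w x = (c : WithBot ℝ)} with hS
  rw [← Set.finite_coe_iff]
  have hmono : ∀ c₁ c₂ : ℝ, c₁ ∈ S → c₂ ∈ S → c₁ < c₂ →
      Module.finrank K (weightBall w hw c₁) < Module.finrank K (weightBall w hw c₂) := by
    intro c₁ c₂ _ hc₂ hlt
    apply Submodule.finrank_lt_finrank_of_lt
    obtain ⟨x, hx⟩ := hc₂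
    refine lt_of_le_of_ne ?_ ?_
    · intro y hy
      have hy' : w y ≤ (c₁ : WithBot ℝ) := hy
      exact le_trans hy' (by exact_mod_cast hlt.le)
    · intro heq
      have hx2 : x ∈ weightBall w hw c₂ := by
        show w x ≤ _
        rw [hx]
      rw [← heq] at hx2
      have : w x ≤ (c₁ : WithBot ℝ) := hx2
      rw [hx] at this
      exact absurd (by exact_mod_cast this) (not_le.mpr hlt)
  have hinj : Function.Injective
      (fun c : S => (⟨Module.finrank K (weightBall w hw c),
        Nat.lt_succ_of_le (Submodule.finrank_le _)⟩ : Fin (Module.finrank K E + 1))) := by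
    intro c₁ c₂ h
    simp only [Fin.mk.injEq] at h
    by_contra hne
    rcases lt_or_gt_of_ne (Subtype.coe_injective.ne hne) with hlt | hlt
    · exact absurd h (Nat.ne_of_lt (hmono _ _ c₁.2 c₂.2 hlt))
    · exact absurd h.symm (Nat.ne_of_lt (hmono _ _ c₂.2 c₁.2 hlt))
  exact Finite.of_injective _ hinj

universe v

theorem exists_adapted_basis {K : Type*} [Field K] :
    ∀ (n : ℕ) (E : Type v) [AddCommGroup E] [Module K E] [FiniteDimensional K E],
      Module.finrank K E ≤ n → ∀ w : E → WithBot ℝ, IsWeightFunction K w →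
      ∃ (ι : Type) (_ : Fintype ι) (e : Module.Basis ι K E),
        ∀ x : E, w x = (e.repr x).support.sup fun i => w (e i) := by
  intro n
  induction n with
  | zero =>
    intro E _ _ _ hrank w hw
    have h0 : Module.finrank K E = 0 := Nat.le_zero.mp hrank
    have hsub : Subsingleton E := Module.finrank_zero_iff.mp h0
    refine ⟨Empty, inferInstance, Module.Basis.empty E, ?_⟩
    intro x
    have hx : x = 0 := Subsingleton.elim x 0
    subst hx
    rw [weight_zero hw, map_zero]
    simp
  | succ n IH =>
    intro E _ _ _ hrank w hw
    by_cases hn : Module.finrank K E ≤ n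
    · exact IH E hn w hw
    push_neg at hn
    have hnt : Nontrivial E := Module.nontrivial_of_finrank_pos (R := K) (by omega)
    set S := {c : ℝ | ∃ x : E, w x = (c : WithBot ℝ)} with hSdef
    have hfin := weight_values_finite hw
    have hSne : S.Nonempty := by
      obtain ⟨x, hx⟩ := exists_ne (0 : E)
      have hb : w x ≠ ⊥ := fun h => hx ((hw.1 x).mp h)
      obtain ⟨c, hc⟩ := WithBot.ne_bot_iff_exists.mp hb
      exact ⟨c, x, hc.symm⟩
    have hne' : hfin.toFinset.Nonempty := by
      rwa [Set.Finite.toFinset_nonempty]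
    set c0 := hfin.toFinset.max' hne' with hc0def
    have hle : ∀ x : E, w x ≤ (c0 : WithBot ℝ) := by
      intro x
      cases hwx : w x with
      | bot => exact bot_le
      | coe c =>
        have hcc : c ≤ c0 := hfin.toFinset.le_max' c (by rw [Set.Finite.mem_toFinset]; exact ⟨x, hwx⟩)
        exact_mod_cast hcc
    set V := weightBallLT w hw c0 with hVdef
    obtain ⟨U, hUV⟩ := Submodule.exists_isCompl V
    have hU : ∀ u : U, u ≠ 0 → w u = (c0 : WithBot ℝ) := by
      intro u hu
      rcases lt_or_eq_of_le (hle (u : E)) with hlt | heq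
      · exfalso
        have huV : (u : E) ∈ V := hlt
        have := Submodule.disjoint_def.mp hUV.disjoint (u : E) huV u.2
        exact hu (Subtype.coe_injective this)
      · exact heq
    have hVlt : V < ⊤ := by
      rcases Set.Finite.mem_toFinset hfin |>.mp (hfin.toFinset.max'_mem hne') with ⟨x1, hx1⟩
      refine lt_top_iff_ne_top.mpr fun htop => ?_
      have hx1V : x1 ∈ V := htop ▸ Submodule.mem_top
      have : w x1 < (c0 : WithBot ℝ) := hx1V
      rw [hx1] at this
      exact lt_irrefl _ this
    have hrankV : Module.finrank K V ≤ n := by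
      have := Submodule.finrank_lt (s := V) hVlt.ne
      omega
    have hwV : IsWeightFunction K (fun v : V => w v) := by
      refine ⟨?_, ?_, ?_⟩
      · intro v
        rw [hw.1]
        exact ⟨fun h => Subtype.coe_injective (by simpa using h), fun h => by simp [h]⟩
      · intro t v ht
        exact hw.2.1 t v ht
      · intro v v'
        exact hw.2.2 (v : E) (v' : E)
    obtain ⟨ι₁, _, e₁, h₁⟩ := IH V hrankV _ hwV
    set e₂ := Module.finBasis K U with he₂
    set φ := Submodule.prodEquivOfIsCompl V U hUV with hφ
    set e := (e₁.prod e₂).map φ with hedef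
    refine ⟨ι₁ ⊕ Fin (Module.finrank K U), inferInstance, e, ?_⟩
    intro x
    set p := φ.symm x with hpdef
    have hx : (p.1 : E) + (p.2 : E) = x := by
      have h := Submodule.coe_prodEquivOfIsCompl' V U hUV p
      rw [hpdef, LinearEquiv.apply_symm_apply] at h
      exact h.symm
    have hrepr : ∀ j, e.repr x j = (e₁.prod e₂).repr p j := by
      intro j
      rw [hedef, Module.Basis.map_repr]
      rfl
    have heinl : ∀ i, e (Sum.inl i) = ((e₁ i : V) : E) := by
      intro i
      rw [hedef, Module.Basis.map_apply]
      have h1 : (e₁.prod e₂) (Sum.inl i) = ((e₁ i : V), (0 : U)) := by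
        simp
      rw [h1, hφ, Submodule.coe_prodEquivOfIsCompl']
      simp
    have heinr : ∀ i, e (Sum.inr i) = ((e₂ i : U) : E) := by
      intro i
      rw [hedef, Module.Basis.map_apply]
      have h1 : (e₁.prod e₂) (Sum.inr i) = ((0 : V), (e₂ i : U)) := by
        simp
      rw [h1, hφ, Submodule.coe_prodEquivOfIsCompl']
      simp
    by_cases hp2 : p.2 = 0
    · -- x lies in V
      have hxv : ((p.1 : E)) = x := by rw [← hx, hp2]; simp
      have hsupp : (e.repr x).support =
          (e₁.repr p.1).support.map ⟨Sum.inl, Sum.inl_injective⟩ := by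
        ext j
        cases j with
        | inl i =>
          simp only [Finsupp.mem_support_iff, Finset.mem_map, Function.Embedding.coeFn_mk]
          rw [hrepr, Module.Basis.prod_repr_inl]
          constructor
          · intro h
            exact ⟨i, h, rfl⟩
          · rintro ⟨i', hi', hii⟩
            cases Sum.inl_injective hii
            exact hi'
        | inr i =>
          simp only [Finsupp.mem_support_iff, Finset.mem_map, Function.Embedding.coeFn_mk]
          rw [hrepr, Module.Basis.prod_repr_inr, hp2]
          simp
      rw [hsupp, Finset.sup_map]
      have : ∀ i, ((fun j => w (e j)) ∘ (⟨Sum.inl, Sum.inl_injective⟩ : ι₁ ↪ ι₁ ⊕ _)) i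
          = w ((e₁ i : V) : E) := by
        intro i
        simp only [Function.comp_apply, Function.Embedding.coeFn_mk]
        rw [heinl]
      rw [show ((fun j => w (e j)) ∘ (⟨Sum.inl, Sum.inl_injective⟩ : ι₁ ↪ ι₁ ⊕ _))
          = fun i => w ((e₁ i : V) : E) from funext this]
      rw [← hxv]
      exact h₁ p.1
    · -- the "new" maximal weight case
      have hwx : w x = (c0 : WithBot ℝ) := by
        refine le_antisymm ?_ ?_
        · calc w x = w ((p.1 : E) + (p.2 : E)) := by rw [hx]
            _ ≤ max (w (p.1 : E)) (w (p.2 : E)) := hw.2.2 _ _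
            _ ≤ (c0 : WithBot ℝ) := max_le (hle _) (hle _)
        · by_contra hcon
          push_neg at hcon
          have hxV : x ∈ V := hcon
          have h2V : ((p.2 : E)) ∈ V := by
            have heq : (p.2 : E) = x - (p.1 : E) := by rw [← hx]; abel
            rw [heq]
            exact V.sub_mem hxV p.1.2
          have := Submodule.disjoint_def.mp hUV.disjoint _ h2V p.2.2
          exact hp2 (Subtype.coe_injective this)
      rw [hwx]
      have hub : ((e.repr x).support.sup fun i => w (e i)) ≤ (c0 : WithBot ℝ) :=
        Finset.sup_le fun j _ => hle (e j)
      refine le_antisymm ?_ hub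
      obtain ⟨i, hi⟩ : ∃ i, e₂.repr p.2 i ≠ 0 := by
        by_contra hcon
        push_neg at hcon
        apply hp2
        have : e₂.repr p.2 = 0 := Finsupp.ext fun i => hcon i
        exact (LinearEquiv.map_eq_zero_iff e₂.repr).mp this
      have hmem : Sum.inr i ∈ (e.repr x).support := by
        rw [Finsupp.mem_support_iff, hrepr, Module.Basis.prod_repr_inr]
        exact hi
      have : w (e (Sum.inr i)) = (c0 : WithBot ℝ) := by
        rw [heinr]
        exact hU (e₂ i) (Module.Basis.ne_zero e₂ i)
      rw [← this]
      exact Finset.le_sup (f := fun j => w (e j)) hmem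

open scoped TensorProduct

section TensorCoord

variable {K E : Type*} [Field K] [AddCommGroup E] [Module K E]
variable {ι : Type*} [Fintype ι]

/-- Coordinate functionals on the tensor power associated to a basis of `E`. -/
noncomputable def tcoord (e : Module.Basis ι K E) (m : ℕ) (α : Fin m → ι) :
    (⨂[K] _ : Fin m, E) →ₗ[K] K :=
  PiTensorProduct.lift
    ((MultilinearMap.mkPiAlgebra K (Fin m) K).compLinearMap fun j => e.coord (α j))

theorem tcoord_tprod (e : Module.Basis ι K E) {m : ℕ} (α : Fin m → ι) (f : Fin m → E) :
    tcoord e m α (PiTensorProduct.tprod K f) = ∏ j, e.repr (f j) (α j) := by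
  simp [tcoord, PiTensorProduct.lift.tprod, MultilinearMap.compLinearMap_apply,
    MultilinearMap.mkPiAlgebra_apply, Module.Basis.coord_apply]

open scoped Classical in
theorem tcoord_tprod_basis (e : Module.Basis ι K E) {m : ℕ} (α β : Fin m → ι) :
    tcoord e m β (PiTensorProduct.tprod K fun j => e (α j)) = if α = β then 1 else 0 := by
  classical
  rw [tcoord_tprod]
  have h1 : ∀ j, e.repr (e (α j)) (β j) = if α j = β j then 1 else 0 := by
    intro j
    rw [Module.Basis.repr_self, Finsupp.single_apply]
  rw [Finset.prod_congr rfl fun j _ => h1 j, Finset.prod_boole]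
  simp [funext_iff]

theorem span_tprod_basis (e : Module.Basis ι K E) (m : ℕ) :
    Submodule.span K (Set.range fun α : Fin m → ι =>
      (PiTensorProduct.tprod K fun j => e (α j) : ⨂[K] _ : Fin m, E)) = ⊤ := by
  classical
  rw [eq_top_iff, ← PiTensorProduct.span_tprod_eq_top, Submodule.span_le]
  rintro _ ⟨f, rfl⟩
  have hf : (PiTensorProduct.tprod K (s := fun _ : Fin m => E)) f =
      ∑ α : Fin m → ι, (∏ j, e.repr (f j) (α j)) •
        PiTensorProduct.tprod K fun j => e (α j) := by
    conv_lhs => rw [show f = fun j => ∑ i, e.repr (f j) i • e i from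
      funext fun j => (e.sum_repr (f j)).symm]
    rw [MultilinearMap.map_sum]
    exact Finset.sum_congr rfl fun α _ => MultilinearMap.map_smul_univ _ _ _
  rw [hf]
  exact Submodule.sum_mem _ fun α _ =>
    Submodule.smul_mem _ _ (Submodule.subset_span ⟨α, rfl⟩)

theorem tcoord_sep (e : Module.Basis ι K E) {m : ℕ} (t : ⨂[K] _ : Fin m, E)
    (h : ∀ α, tcoord e m α t = 0) : t = 0 := by
  classical
  have ht : t ∈ Submodule.span K (Set.range fun α : Fin m → ι =>
      (PiTensorProduct.tprod K fun j => e (α j) : ⨂[K] _ : Fin m, E)) := by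
    rw [span_tprod_basis]
    trivial
  rw [Finsupp.mem_span_range_iff_exists_finsupp] at ht
  obtain ⟨g, hg⟩ := ht
  have hgβ : ∀ β, g β = 0 := by
    intro β
    have h2 := h β
    rw [← hg, map_finsuppSum] at h2
    simp only [map_smul, tcoord_tprod_basis, smul_eq_mul, mul_ite, mul_one, mul_zero] at h2
    rw [Finsupp.sum_ite_eq' g β (fun _ v => v)] at h2
    by_cases hβ : β ∈ g.support
    · simpa [hβ] using h2
    · simpa using Finsupp.notMem_support_iff.mp hβ
  rw [← hg]
  simp [Finsupp.sum, hgβ]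

end TensorCoord

theorem nsmul_bot_real {m : ℕ} (hm : 0 < m) : m • (⊥ : WithBot ℝ) = ⊥ := by
  obtain ⟨k, rfl⟩ := Nat.exists_eq_succ_of_ne_zero hm.ne'
  rw [succ_nsmul]
  simp

open scoped TensorProduct in
/-- Let `K` be a field of characteristic zero, `E` a finite-dimensional `K`-vector
space, `w` a weight function on `E` and `m` a positive integer. Then there is a weight
function `W` on `Sym^m E` with `W (x^m) = m • w x` for every `x : E`, where `x^m` is
the `m`-th symmetric power `x ⊗ ⋯ ⊗ x` of `x`. -/
theorem symmetric_power_weight_function (K : Type*) [Field K] [CharZero K] (E : Type*)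
    [AddCommGroup E] [Module K E] [FiniteDimensional K E]
    (w : E → WithBot ℝ) (hw : IsWeightFunction K w) (m : ℕ) (hm : 0 < m) :
    ∃ W : symmetricPower K E m → WithBot ℝ, IsWeightFunction K W ∧
      ∀ (x : E) (t : symmetricPower K E m),
        (t : ⨂[K] _ : Fin m, E) = PiTensorProduct.tprod K (fun _ : Fin m => x) →
        W t = m • w x := by
  classical
  obtain ⟨ι, _, e, he⟩ := exists_adapted_basis (Module.finrank K E) E le_rfl w hw
  set lam : ι → ℝ := fun i => WithBot.unbotD 0 (w (e i)) with hlam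
  have hlamc : ∀ i, ((lam i : ℝ) : WithBot ℝ) = w (e i) := by
    intro i
    have hne : w (e i) ≠ ⊥ := fun h => (Module.Basis.ne_zero e i) ((hw.1 _).mp h)
    cases h : w (e i) with
    | bot => exact absurd h hne
    | coe c => simp [hlam, h]
  set μ : (Fin m → ι) → ℝ := fun α => ∑ j, lam (α j) with hμ
  set W0 : (⨂[K] _ : Fin m, E) → WithBot ℝ := supWeight (tcoord e m) μ with hW0
  have hWF0 := supWeight_isWeightFunction (tcoord e m) μ (fun t h => tcoord_sep e t h)
  refine ⟨fun t => W0 (t : ⨂[K] _ : Fin m, E), ⟨?_, ?_, ?_⟩, ?_⟩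
  · intro t
    rw [hWF0.1]
    exact ⟨fun h => Subtype.coe_injective (by simpa using h), fun h => by simp [h]⟩
  · intro s t hs
    show W0 ((s • t : symmetricPower K E m) : ⨂[K] _ : Fin m, E) = _
    rw [Submodule.coe_smul]
    exact hWF0.2.1 s t hs
  · intro t t'
    show W0 ((t + t' : symmetricPower K E m) : ⨂[K] _ : Fin m, E) ≤ _
    rw [Submodule.coe_add]
    exact hWF0.2.2 (t : ⨂[K] _ : Fin m, E) (t' : ⨂[K] _ : Fin m, E)
  · intro x t hteq
    show W0 (t : ⨂[K] _ : Fin m, E) = m • w x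
    rw [hteq]
    by_cases hx : x = 0
    · subst hx
      have h0 : (PiTensorProduct.tprod K fun _ : Fin m => (0 : E)) = 0 :=
        (PiTensorProduct.tprod K).map_coord_zero (⟨0, hm⟩ : Fin m) rfl
      rw [h0, hW0, (hWF0.1 0).mpr rfl, weight_zero hw, nsmul_bot_real hm]
    · set a := e.repr x with ha
      have hane : a.support.Nonempty := by
        rw [Finsupp.support_nonempty_iff]
        exact fun h => hx ((LinearEquiv.map_eq_zero_iff e.repr).mp h)
      set c := a.support.sup' hane lam with hc
      obtain ⟨i0, hi0mem, hi0⟩ := Finset.exists_mem_eq_sup' hane lam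
      have hwx : w x = (c : WithBot ℝ) := by
        rw [he x, ← ha]
        rw [show (fun i => w (e i)) = fun i => ((lam i : ℝ) : WithBot ℝ) from
          funext fun i => (hlamc i).symm]
        rw [hc, Finset.coe_sup']
        rfl
      have hkey : W0 (PiTensorProduct.tprod K fun _ : Fin m => x)
          = ((m • c : ℝ) : WithBot ℝ) := by
        rw [hW0, supWeight]
        refine le_antisymm ?_ ?_
        · apply Finset.sup_le
          intro α _
          by_cases hα : tcoord e m α (PiTensorProduct.tprod K fun _ : Fin m => x) = 0
          · simp [hα]
          · simp only [hα, ite_false]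
            rw [WithBot.coe_le_coe]
            rw [tcoord_tprod] at hα
            have hαs : ∀ j, α j ∈ a.support := by
              intro j
              rw [Finsupp.mem_support_iff]
              exact Finset.prod_ne_zero_iff.mp hα j (Finset.mem_univ j)
            calc μ α = ∑ j, lam (α j) := rfl
              _ ≤ ∑ _j : Fin m, c := Finset.sum_le_sum fun j _ =>
                  Finset.le_sup' lam (hαs j)
              _ = m • c := by rw [Finset.sum_const, Finset.card_univ, Fintype.card_fin]
        · have hα0 : tcoord e m (fun _ => i0) (PiTensorProduct.tprod K fun _ : Fin m => x)
              ≠ 0 := by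
            rw [tcoord_tprod]
            exact Finset.prod_ne_zero_iff.mpr fun j _ => Finsupp.mem_support_iff.mp hi0mem
          have hμ0 : μ (fun _ => i0) = m • c := by
            simp only [hμ]
            rw [hc, hi0, Finset.sum_const, Finset.card_univ, Fintype.card_fin]
          refine le_trans ?_ (Finset.le_sup (f := fun α =>
            if tcoord e m α (PiTensorProduct.tprod K fun _ : Fin m => x) = 0 then ⊥
            else ((μ α : ℝ) : WithBot ℝ)) (Finset.mem_univ fun _ => i0))
          simp only [hα0, ite_false]
          rw [hμ0]
      rw [hkey, hwx, WithBot.coe_nsmul]
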